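/- arXiv:2302.13479 — 2 statements merged into one kernel-verified Lean document; each statement's English description precedes it below -/
import Mathlib

section
/- (Threshold structure of the value-iteration optimizer, Lemma 2 for the iterates.) For every n ≥ 0 and all integers 1 ≤ Δ₁ ≤ Δ₂: if transmitting is optimal at age Δ₁, i.e. Q¹_{n+1}(Δ₁) ≤ Q⁰_{n+1}(Δ₁), then transmitting is also optimal at age Δ₂, i.e. Q¹_{n+1}(Δ₂) ≤ Q⁰_{n+1}(Δ₂). Consequently, for every n there exists a threshold such that, among admissible states (those with Λ ≥ D(Δ)), the minimum defining V_{n+1}(Δ,Λ) is attained by the transmit action exactly when Δ is at least that threshold. -/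
/-- Value-iteration functions for the discounted age-plus-energy MDP with
age-dependent distortion requirement. `VI M P p α β D n Δ Λ` is `V_n(Δ, Λ)`. -/
noncomputable def VI (M : ℕ) (P : ℕ → ℝ) (p α β : ℝ) (D : ℕ → ℕ) :
    ℕ → ℕ → ℕ → ℝ
  | 0 => fun _ _ => 0
  | n + 1 => fun Δ Λ =>
      let En : ℕ → ℝ := fun d => ∑ l ∈ Finset.range (M + 1), P l * VI M P p α β D n d l
      let Q0 : ℝ := (Δ : ℝ) + α * En (Δ + 1)
      let Q1 : ℝ := (Δ : ℝ) + β + α * (p * En (Δ + 1) + (1 - p) * En 1)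
      if D Δ ≤ Λ then min Q0 Q1 else Q0

/-- `EnVI M P p α β D n Δ = E_n(Δ) = Σ_{Λ'=0}^{M} P(Λ')·V_n(Δ, Λ')`. -/
noncomputable def EnVI (M : ℕ) (P : ℕ → ℝ) (p α β : ℝ) (D : ℕ → ℕ) (n Δ : ℕ) : ℝ :=
  ∑ l ∈ Finset.range (M + 1), P l * VI M P p α β D n Δ l

/-- `Qzero M P p α β D n Δ = Q⁰_{n+1}(Δ)`, the no-transmission cost-to-go. -/
noncomputable def Qzero (M : ℕ) (P : ℕ → ℝ) (p α β : ℝ) (D : ℕ → ℕ) (n Δ : ℕ) : ℝ :=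
  (Δ : ℝ) + α * EnVI M P p α β D n (Δ + 1)

/-- `Qone M P p α β D n Δ = Q¹_{n+1}(Δ)`, the transmission cost-to-go. -/
noncomputable def Qone (M : ℕ) (P : ℕ → ℝ) (p α β : ℝ) (D : ℕ → ℕ) (n Δ : ℕ) : ℝ :=
  (Δ : ℝ) + β + α * (p * EnVI M P p α β D n (Δ + 1) + (1 - p) * EnVI M P p α β D n 1)

lemma VI_succ (M : ℕ) (P : ℕ → ℝ) (p α β : ℝ) (D : ℕ → ℕ) (n Δ Λ : ℕ) :
    VI M P p α β D (n + 1) Δ Λ =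
      if D Δ ≤ Λ then min (Qzero M P p α β D n Δ) (Qone M P p α β D n Δ)
      else Qzero M P p α β D n Δ := by
  simp only [VI, EnVI, Qzero, Qone]

lemma VI_mono (M : ℕ) (P : ℕ → ℝ) (p α β : ℝ) (D : ℕ → ℕ)
    (hP : ∀ l, 0 ≤ P l) (hp0 : 0 ≤ p) (hα0 : 0 < α) (hD : Monotone D) :
    ∀ n Δ₁ Δ₂ Λ, Δ₁ ≤ Δ₂ → VI M P p α β D n Δ₁ Λ ≤ VI M P p α β D n Δ₂ Λ := by
  intro n
  induction n with
  | zero => intro _ _ _ _; simp [VI]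
  | succ n ih =>
    have hEn : ∀ Δ₁ Δ₂, Δ₁ ≤ Δ₂ →
        EnVI M P p α β D n Δ₁ ≤ EnVI M P p α β D n Δ₂ := by
      intro Δ₁ Δ₂ h
      refine Finset.sum_le_sum fun l _ => ?_
      exact mul_le_mul_of_nonneg_left (ih Δ₁ Δ₂ l h) (hP l)
    intro Δ₁ Δ₂ Λ h
    have hQ0 : Qzero M P p α β D n Δ₁ ≤ Qzero M P p α β D n Δ₂ := by
      have := hEn (Δ₁ + 1) (Δ₂ + 1) (by omega)
      unfold Qzero
      have : α * EnVI M P p α β D n (Δ₁ + 1) ≤ α * EnVI M P p α β D n (Δ₂ + 1) :=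
        mul_le_mul_of_nonneg_left this hα0.le
      have hc : (Δ₁ : ℝ) ≤ (Δ₂ : ℝ) := Nat.cast_le.2 h
      linarith
    have hQ1 : Qone M P p α β D n Δ₁ ≤ Qone M P p α β D n Δ₂ := by
      have hE := hEn (Δ₁ + 1) (Δ₂ + 1) (by omega)
      unfold Qone
      have hc : (Δ₁ : ℝ) ≤ (Δ₂ : ℝ) := Nat.cast_le.2 h
      have : α * p * EnVI M P p α β D n (Δ₁ + 1) ≤ α * p * EnVI M P p α β D n (Δ₂ + 1) :=
        mul_le_mul_of_nonneg_left hE (mul_nonneg hα0.le hp0)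
      nlinarith
    rw [VI_succ, VI_succ]
    by_cases h2 : D Δ₂ ≤ Λ
    · have h1 : D Δ₁ ≤ Λ := le_trans (hD h) h2
      rw [if_pos h1, if_pos h2]
      exact min_le_min hQ0 hQ1
    · rw [if_neg h2]
      by_cases h1 : D Δ₁ ≤ Λ
      · rw [if_pos h1]; exact le_trans (min_le_left _ _) hQ0
      · rw [if_neg h1]; exact hQ0

/-- Threshold structure of the value-iteration optimizer: if transmitting is optimal at
age `Δ₁` then it is optimal at any larger age `Δ₂`; consequently there is a threshold
(possibly infinite) such that, among admissible states, the minimum defining `V_{n+1}`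
is attained by the transmit action exactly when the age is at least the threshold. -/
theorem VI_threshold_structure (M : ℕ) (P : ℕ → ℝ) (p α β : ℝ) (D : ℕ → ℕ)
    (hP : ∀ l, 0 ≤ P l) (hPsum : ∑ l ∈ Finset.range (M + 1), P l = 1)
    (hp0 : 0 ≤ p) (hp1 : p ≤ 1) (hα0 : 0 < α) (hα1 : α < 1) (hβ : 0 ≤ β)
    (hD : Monotone D) :
    ∀ n : ℕ,
      (∀ Δ₁ Δ₂ : ℕ, 1 ≤ Δ₁ → Δ₁ ≤ Δ₂ →
        Qone M P p α β D n Δ₁ ≤ Qzero M P p α β D n Δ₁ →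
        Qone M P p α β D n Δ₂ ≤ Qzero M P p α β D n Δ₂) ∧
      (∃ T : ℕ∞, ∀ Δ Λ : ℕ, 1 ≤ Δ → Λ ≤ M → D Δ ≤ Λ →
        ((VI M P p α β D (n + 1) Δ Λ = Qone M P p α β D n Δ ∧
          Qone M P p α β D n Δ ≤ Qzero M P p α β D n Δ) ↔ T ≤ (Δ : ℕ∞))) := by
  intro n
  have hEn : ∀ Δ₁ Δ₂ : ℕ, Δ₁ ≤ Δ₂ →
      EnVI M P p α β D n Δ₁ ≤ EnVI M P p α β D n Δ₂ := by
    intro Δ₁ Δ₂ h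
    refine Finset.sum_le_sum fun l _ => ?_
    exact mul_le_mul_of_nonneg_left (VI_mono M P p α β D hP hp0 hα0 hD n Δ₁ Δ₂ l h) (hP l)
  have key : ∀ Δ₁ Δ₂ : ℕ, 1 ≤ Δ₁ → Δ₁ ≤ Δ₂ →
      Qone M P p α β D n Δ₁ ≤ Qzero M P p α β D n Δ₁ →
      Qone M P p α β D n Δ₂ ≤ Qzero M P p α β D n Δ₂ := by
    intro Δ₁ Δ₂ _ h12 hq
    have hE := hEn (Δ₁ + 1) (Δ₂ + 1) (by omega)
    unfold Qone Qzero at *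
    nlinarith [mul_nonneg (mul_nonneg hα0.le (by linarith : (0:ℝ) ≤ 1 - p))
      (sub_nonneg.2 hE)]
  refine ⟨key, ?_⟩
  by_cases h : ∃ Δ : ℕ, 1 ≤ Δ ∧ Qone M P p α β D n Δ ≤ Qzero M P p α β D n Δ
  · classical
    refine ⟨(Nat.find h : ℕ∞), fun Δ Λ hΔ _ hadm => ?_⟩
    rw [VI_succ, if_pos hadm]
    constructor
    · rintro ⟨_, hq⟩
      have : Nat.find h ≤ Δ := Nat.find_le ⟨hΔ, hq⟩
      exact_mod_cast this
    · intro hT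
      have hT' : Nat.find h ≤ Δ := by exact_mod_cast hT
      obtain ⟨h1, h2⟩ := Nat.find_spec h
      have hq := key _ _ h1 hT' h2
      exact ⟨min_eq_right hq, hq⟩
  · refine ⟨⊤, fun Δ Λ hΔ _ hadm => ?_⟩
    constructor
    · rintro ⟨_, hq⟩
      exact absurd ⟨Δ, hΔ, hq⟩ h
    · intro hT
      exact absurd (top_le_iff.1 hT) WithTop.coe_ne_top
end

section
/- (Theorem 5(i), second half.) If 0 < β·W < 1, then the threshold function p ↦ G(W, p; β) is strictly decreasing on [0, 1): for all 0 ≤ p₁ < p₂ < 1, G(W, p₁; β) > G(W, p₂; β). -/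
/-- The optimal-threshold function `G(W, p; β)` of Corollary 1, with
`R = 1 − (1−p)·W`. -/
noncomputable def G (W p β : ℝ) : ℝ :=
  let R := 1 - (1 - p) * W;
  -(1 + R) / (2 * (1 - R)) +
    Real.sqrt (R ^ 2 / (1 - R) ^ 2 + (R + 2 * β * W) / (1 - R) + 1 / 4)

private lemma key_anti (a x₁ x₂ : ℝ) (ha1 : -1 < a) (ha2 : a < 1)
    (hx1 : 0 < x₁) (hlt : x₁ < x₂) :
    1/2 - x₂ + Real.sqrt (x₂^2 + a*x₂ + 1/4) <
      1/2 - x₁ + Real.sqrt (x₁^2 + a*x₁ + 1/4) := by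
  have hx2 : 0 < x₂ := hx1.trans hlt
  have hS₁ : 0 < x₁^2 + a*x₁ + 1/4 := by nlinarith [sq_nonneg (2*x₁ + a)]
  have hs₁ := Real.sq_sqrt hS₁.le
  have hs₁pos : 0 < Real.sqrt (x₁^2 + a*x₁ + 1/4) := Real.sqrt_pos.mpr hS₁
  have key : Real.sqrt (x₂^2 + a*x₂ + 1/4) <
      Real.sqrt (x₁^2 + a*x₁ + 1/4) + (x₂ - x₁) := by
    rw [Real.sqrt_lt' (by linarith)]
    have h2s : 2*x₁ + a < 2*Real.sqrt (x₁^2 + a*x₁ + 1/4) := by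
      rcases le_or_gt (2*x₁ + a) 0 with h | h
      · linarith
      · have hsq : (2*x₁ + a)^2 < (2*Real.sqrt (x₁^2 + a*x₁ + 1/4))^2 := by
          nlinarith [hs₁]
        exact lt_of_pow_lt_pow_left₀ 2 (by positivity) hsq
    nlinarith [hs₁, mul_lt_mul_of_pos_right h2s (sub_pos.mpr hlt)]
  linarith

private lemma G_eq (W p β : ℝ) (hW0 : 0 < W) (hp : p < 1) :
    G W p β = 1/2 - 1/((1-p)*W) +
      Real.sqrt ((1/((1-p)*W))^2 + (2*β*W - 1)*(1/((1-p)*W)) + 1/4) := by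
  have hq : 0 < (1-p)*W := mul_pos (by linarith) hW0
  unfold G
  simp only []
  have h1 : 1 - (1 - (1 - p) * W) = (1-p)*W := by ring
  rw [h1]
  congr 1
  · field_simp [(sub_pos.mpr hp).ne']
    ring
  · congr 1
    field_simp [(sub_pos.mpr hp).ne']
    ring

/-- Theorem 5(i), second half: if `0 < β·W < 1` then `p ↦ G(W, p; β)` is strictly
decreasing on `[0, 1)`. -/
theorem G_strictAnti_in_p (β W : ℝ) (hβ : 0 ≤ β) (hW0 : 0 < W) (hW1 : W ≤ 1)
    (h0 : 0 < β * W) (h1 : β * W < 1) :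
    ∀ p₁ p₂ : ℝ, 0 ≤ p₁ → p₁ < p₂ → p₂ < 1 → G W p₂ β < G W p₁ β := by
  intro p₁ p₂ hp₁ hlt hp₂
  have hp₁1 : p₁ < 1 := hlt.trans hp₂
  have hq₁ : 0 < (1-p₁)*W := mul_pos (by linarith) hW0
  have hq₂ : 0 < (1-p₂)*W := mul_pos (by linarith) hW0
  rw [G_eq W p₁ β hW0 hp₁1, G_eq W p₂ β hW0 hp₂]
  have hx : 1/((1-p₁)*W) < 1/((1-p₂)*W) := by
    apply one_div_lt_one_div_of_lt hq₂
    have : (1-p₂) < (1-p₁) := by linarith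
    exact mul_lt_mul_of_pos_right this hW0
  have := key_anti (2*β*W - 1) (1/((1-p₁)*W)) (1/((1-p₂)*W))
    (by linarith) (by linarith) (by positivity) hx
  linarith
end
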